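/- Let q be prime, r < q, and let A(X), B_0(X), ..., B_{r−1}(X) ∈ F_q[X]. Then the set V = { f ∈ F_q[X] : deg(f) ≤ d and Σ_{i=0}^{r−1} B_i(X) f^{(i)}(X) = 0 } is closed under multiplication by X^q, in the sense that if f ∈ V and deg(f) ≤ d − q then X^q · f(X) ∈ V. -/

import Mathlib

lemma hasseDeriv_Xq_mul (q : ℕ) [Fact q.Prime] (k : ℕ) (hk : k < q)
    (f : Polynomial (ZMod q)) :
    Polynomial.hasseDeriv k (Polynomial.X ^ q * f) =
      Polynomial.X ^ q * Polynomial.hasseDeriv k f := by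
  rw [Polynomial.hasseDeriv_mul]
  rw [Finset.sum_eq_single (0, k)]
  · simp [Polynomial.hasseDeriv_zero]
  · rintro ⟨a, b⟩ hab hne
    rw [Finset.HasAntidiagonal.mem_antidiagonal] at hab
    have ha : a ≠ 0 := by
      rintro rfl
      simp at hab
      exact hne (by simp [hab])
    have haq : a < q := lt_of_le_of_lt (hab ▸ Nat.le_add_right a b) hk
    have : Polynomial.hasseDeriv a (Polynomial.X ^ q : Polynomial (ZMod q)) = 0 := by
      rw [← Polynomial.monomial_one_right_eq_X_pow, Polynomial.hasseDeriv_monomial]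
      have : (q.choose a : ZMod q) = 0 := by
        rw [ZMod.natCast_eq_zero_iff]
        exact Nat.Prime.dvd_choose_self (Fact.out) ha haq
      simp [this]
    simp [this]
  · intro h
    simp [Finset.HasAntidiagonal.mem_antidiagonal] at h

theorem stmt_4 (q r d : ℕ) [Fact q.Prime] (hr : r < q)
    (B : Fin r → Polynomial (ZMod q)) (f : Polynomial (ZMod q))
    (hfd : f.natDegree ≤ d)
    (hf : ∑ i : Fin r, B i * Polynomial.hasseDeriv (i : ℕ) f = 0)
    (hfd' : f.natDegree + q ≤ d) :
    (Polynomial.X ^ q * f).natDegree ≤ d ∧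
      ∑ i : Fin r, B i * Polynomial.hasseDeriv (i : ℕ) (Polynomial.X ^ q * f) = 0 := by
  constructor
  · calc (Polynomial.X ^ q * f).natDegree ≤ (Polynomial.X ^ q : Polynomial (ZMod q)).natDegree + f.natDegree :=
          Polynomial.natDegree_mul_le
    _ ≤ q + f.natDegree := by simp [Polynomial.natDegree_X_pow]
    _ ≤ d := by omega
  · have : ∀ i : Fin r, B i * Polynomial.hasseDeriv (i : ℕ) (Polynomial.X ^ q * f)
        = Polynomial.X ^ q * (B i * Polynomial.hasseDeriv (i : ℕ) f) := by
      intro i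
      rw [hasseDeriv_Xq_mul q i (lt_of_lt_of_le i.2 hr.le)]
      ring
    simp_rw [this, ← Finset.mul_sum, hf, mul_zero]
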